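/- arXiv:1701.00856 — 2 statements merged into one kernel-verified Lean document; each statement's English description precedes it below -/
import Mathlib

section
/- Let Σ be an r×r real symmetric positive definite matrix, Σ_X a p×p real symmetric positive definite matrix with positive definite square root Σ_X^{1/2}, β an r×p real matrix, and G_o an r×m real matrix with full column rank. If G_oᵀ β ≠ 0, then log det(I_p + Σ_X^{1/2} βᵀ G_o (G_oᵀ Σ G_o)⁻¹ G_oᵀ β Σ_X^{1/2}) > 0. -/
open Matrix

/-- A positive-definite conjugation of a nonzero matrix is nonzero. -/
theorem conj_psd_ne_zero {n q : ℕ} {A : Matrix (Fin n) (Fin n) ℝ} (hA : A.PosDef)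
    (B : Matrix (Fin n) (Fin q) ℝ) (hB : B ≠ 0) : Bᴴ * A * B ≠ 0 := by
  intro h0
  obtain ⟨i, j, hij⟩ : ∃ i j, B i j ≠ 0 := by
    by_contra h
    push_neg at h
    exact hB (by ext i j; simpa using h i j)
  have hx : B *ᵥ Pi.single j 1 ≠ 0 := by
    intro hz
    apply hij
    have := congrFun hz i
    simpa [mulVec_single] using this
  have hpos := hA.dotProduct_mulVec_pos hx
  have hpos' : (0:ℝ) < star (Pi.single j 1 : Fin q → ℝ) ⬝ᵥ (Bᴴ * A * B) *ᵥ Pi.single j 1 := by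
    simpa only [star_mulVec, dotProduct_mulVec, vecMul_vecMul] using hpos
  rw [h0] at hpos'
  simp at hpos'

/-- If `M` is positive semidefinite and nonzero, then `det (1 + M) > 1`. -/
theorem one_lt_det_one_add_of_posSemidef_ne_zero {p : ℕ}
    (M : Matrix (Fin p) (Fin p) ℝ) (hMpsd : M.PosSemidef) (hM0 : M ≠ 0) :
    1 < ((1 : Matrix (Fin p) (Fin p) ℝ) + M).det := by
  have hM : M.IsHermitian := hMpsd.1
  set μ := hM.eigenvalues with hμ
  have hUU : (hM.eigenvectorUnitary : Matrix (Fin p) (Fin p) ℝ) *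
      star (hM.eigenvectorUnitary : Matrix (Fin p) (Fin p) ℝ) = 1 :=
    mem_unitaryGroup_iff.mp hM.eigenvectorUnitary.2
  have hspec := hM.spectral_theorem
  rw [Unitary.conjStarAlgAut_apply] at hspec
  have key : ((1 : Matrix (Fin p) (Fin p) ℝ) + M).det = ∏ i, (1 + μ i) := by
    have h1 : (1 : Matrix (Fin p) (Fin p) ℝ) + M
        = (hM.eigenvectorUnitary : Matrix (Fin p) (Fin p) ℝ)
          * ((1 : Matrix (Fin p) (Fin p) ℝ) + diagonal (RCLike.ofReal ∘ μ))
          * star (hM.eigenvectorUnitary : Matrix (Fin p) (Fin p) ℝ) := by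
      rw [Matrix.mul_add, Matrix.add_mul, ← hspec, Matrix.mul_one, hUU]
    rw [h1, det_mul_right_comm, hUU, Matrix.one_mul]
    rw [show (1 : Matrix (Fin p) (Fin p) ℝ) = diagonal (fun _ => 1) by simp, diagonal_add,
      det_diagonal]
    simp [RCLike.ofReal]
  rw [key]
  have hnn : ∀ i, 0 ≤ μ i := hMpsd.eigenvalues_nonneg
  have hex : ∃ i, 0 < μ i := by
    by_contra h
    push_neg at h
    have hz : hM.eigenvalues = 0 := funext fun i => le_antisymm (h i) (hnn i)
    apply hM0
    rw [hspec, hz]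
    have hd : (diagonal (RCLike.ofReal ∘ (0 : Fin p → ℝ)) : Matrix (Fin p) (Fin p) ℝ) = 0 := by
      ext i j; simp [diagonal, Function.comp]
    rw [hd, Matrix.mul_zero, Matrix.zero_mul]
  obtain ⟨i, hi⟩ := hex
  calc (1:ℝ) = ∏ _j : Fin p, (1:ℝ) := by simp
    _ < ∏ j, (1 + μ j) :=
      Finset.prod_lt_prod (fun j _ => one_pos) (fun j _ => by linarith [hnn j])
        ⟨i, Finset.mem_univ i, by linarith⟩

/-- If `G_oᵀ β ≠ 0`, then
`log det(I_p + Σ_X^{1/2} βᵀ G_o (G_oᵀ Σ G_o)⁻¹ G_oᵀ β Σ_X^{1/2}) > 0`. -/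
theorem log_det_pos_of_bias
    {r p m : ℕ}
    (S : Matrix (Fin r) (Fin r) ℝ) (hS : S.PosDef)
    (Sx : Matrix (Fin p) (Fin p) ℝ) (hSx : Sx.PosDef)
    (Sx12 : Matrix (Fin p) (Fin p) ℝ) (hSx12 : Sx12.PosDef)
    (hsq : Sx12 * Sx12 = Sx)
    (β : Matrix (Fin r) (Fin p) ℝ)
    (Go : Matrix (Fin r) (Fin m) ℝ) (hGo : Go.rank = m)
    (hbias : Goᵀ * β ≠ 0) :
    0 < Real.log
      ((1 : Matrix (Fin p) (Fin p) ℝ)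
        + Sx12 * βᵀ * Go * (Goᵀ * S * Go)⁻¹ * Goᵀ * β * Sx12).det := by
  -- `Go` has full column rank, so `Go *ᵥ ·` is injective
  have hinj : Function.Injective (Go.mulVec) := by
    have h : LinearMap.ker Go.mulVecLin = ⊥ := by
      rw [← Submodule.finrank_eq_zero (R := ℝ)]
      have h2 := LinearMap.finrank_range_add_finrank_ker Go.mulVecLin
      rw [Module.finrank_pi, Fintype.card_fin] at h2
      have : Module.finrank ℝ (LinearMap.range Go.mulVecLin) = m := hGo
      omega
    exact LinearMap.ker_eq_bot.mp h
  -- `Goᵀ S Go` is positive definite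
  have hGSG : (Goᴴ * S * Go).PosDef := by
    refine PosDef.of_dotProduct_mulVec_pos ?_ ?_
    · exact isHermitian_conjTranspose_mul_mul Go hS.1
    · intro x hx
      have hGx : Go *ᵥ x ≠ 0 := fun h => hx (hinj (by simpa using h))
      simpa only [star_mulVec, dotProduct_mulVec, vecMul_vecMul] using hS.dotProduct_mulVec_pos hGx
  have hGSG' : (Goᵀ * S * Go).PosDef := by
    rwa [← conjTranspose_eq_transpose_of_trivial]
  have hA : ((Goᵀ * S * Go)⁻¹).PosDef := hGSG'.inv
  set B := Goᵀ * β * Sx12 with hB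
  -- rewrite the middle matrix as `Bᴴ A B`
  have hMeq : Sx12 * βᵀ * Go * (Goᵀ * S * Go)⁻¹ * Goᵀ * β * Sx12
      = Bᴴ * (Goᵀ * S * Go)⁻¹ * B := by
    have hs : Sx12ᵀ = Sx12 := hSx12.1
    simp only [hB, conjTranspose_eq_transpose_of_trivial, transpose_mul, transpose_transpose, hs]
    simp only [Matrix.mul_assoc]
  have hMpsd : (Bᴴ * (Goᵀ * S * Go)⁻¹ * B).PosSemidef :=
    hA.posSemidef.conjTranspose_mul_mul_same B
  -- `B ≠ 0`
  have hBne : B ≠ 0 := by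
    intro h0
    apply hbias
    letI := hSx12.isUnit.invertible
    have : Goᵀ * β = B * Sx12⁻¹ := by
      rw [hB, Matrix.mul_inv_cancel_right_of_invertible]
    rw [this, h0, Matrix.zero_mul]
  have hMne : Bᴴ * (Goᵀ * S * Go)⁻¹ * B ≠ 0 := conj_psd_ne_zero hA B hBne
  rw [hMeq]
  exact Real.log_pos (one_lt_det_one_add_of_posSemidef_ne_zero _ hMpsd hMne)
end

section
/- Let S be an r×r real symmetric positive definite matrix, Σ_X a p×p real symmetric positive semidefinite matrix with positive semidefinite square root Σ_X^{1/2}, β an r×p real matrix, and let (G, G_o) be an orthogonal partition with G of size r×j and G_o of size r×(r−j), where 1 ≤ j ≤ r−1. Then log det(Gᵀ S G) + log det(G_oᵀ (S + β Σ_X βᵀ) G_o) − log det(S) ≥ log det(I_p + Σ_X^{1/2} βᵀ G_o (G_oᵀ S G_o)⁻¹ G_oᵀ β Σ_X^{1/2}). -/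
open Matrix

section Aux

variable {n m : Type*} [Fintype n] [DecidableEq n] [Fintype m] [DecidableEq m]

/-- For a real positive semidefinite matrix `P`, `1 ≤ det (1 + P)`. -/
lemma aux_one_le_det_one_add {P : Matrix n n ℝ} (hP : P.PosSemidef) :
    1 ≤ (1 + P).det := by
  have hH : P.IsHermitian := hP.1
  set U : Matrix n n ℝ := (hH.eigenvectorUnitary : Matrix n n ℝ) with hUdef
  have hspec : P = U * Matrix.diagonal (RCLike.ofReal ∘ hH.eigenvalues) * star U :=
    hH.spectral_theorem
  have hU : U * star U = 1 := Matrix.mem_unitaryGroup_iff.mp hH.eigenvectorUnitary.2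
  have h1 : (1 : Matrix n n ℝ) + P
      = U * (1 + Matrix.diagonal (RCLike.ofReal ∘ hH.eigenvalues)) * star U := by
    rw [Matrix.mul_add, Matrix.add_mul, Matrix.mul_one, hU, ← hspec]
  have hdetU : U.det * (star U).det = 1 := by rw [← det_mul, hU, det_one]
  have h2 : ((1 : Matrix n n ℝ) + P).det
      = ((1 : Matrix n n ℝ) + Matrix.diagonal (RCLike.ofReal ∘ hH.eigenvalues)).det := by
    rw [h1, det_mul, det_mul]
    calc U.det * ((1 : Matrix n n ℝ) + Matrix.diagonal (RCLike.ofReal ∘ hH.eigenvalues)).det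
          * (star U).det
        = ((1 : Matrix n n ℝ) + Matrix.diagonal (RCLike.ofReal ∘ hH.eigenvalues)).det
            * (U.det * (star U).det) := by ring
      _ = _ := by rw [hdetU, mul_one]
  rw [h2, ← Matrix.diagonal_one, Matrix.diagonal_add, det_diagonal]
  have hprod : ∏ _i : n, (1 : ℝ) ≤ ∏ i : n, (1 + (RCLike.ofReal ∘ hH.eigenvalues) i) := by
    refine Finset.prod_le_prod (fun i _ => zero_le_one) (fun i _ => ?_)
    have h5 : (0 : ℝ) ≤ (RCLike.ofReal ∘ hH.eigenvalues) i := by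
      simpa using hP.eigenvalues_nonneg i
    linarith
  simpa using hprod

/-- Conjugation of a positive definite matrix by a matrix with orthonormal columns. -/
lemma aux_posdef_conj {S : Matrix n n ℝ} (hS : S.PosDef)
    (K : Matrix n m ℝ) (hK : Kᵀ * K = 1) : (Kᵀ * S * K).PosDef := by
  have hH : (Kᵀ * S * K).IsHermitian := by
    have := Matrix.isHermitian_conjTranspose_mul_mul K hS.1
    rwa [conjTranspose_eq_transpose_of_trivial] at this
  refine Matrix.PosDef.of_dotProduct_mulVec_pos hH (fun x hx => ?_)
  have hKx : K *ᵥ x ≠ 0 := by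
    intro h
    apply hx
    have h1 : (Kᵀ * K) *ᵥ x = Kᵀ *ᵥ (K *ᵥ x) := by rw [← Matrix.mulVec_mulVec]
    rw [hK, Matrix.one_mulVec] at h1
    rw [h1, h, Matrix.mulVec_zero]
  have hpos := hS.dotProduct_mulVec_pos hKx
  have hrw : dotProduct (star x) ((Kᵀ * S * K) *ᵥ x)
      = dotProduct (star (K *ᵥ x)) (S *ᵥ (K *ᵥ x)) := by
    simp only [star_trivial, ← Matrix.mulVec_mulVec, Matrix.dotProduct_mulVec,
      Matrix.vecMul_transpose]
  rw [hrw]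
  exact hpos

/-- A real positive semidefinite matrix has nonnegative determinant. -/
lemma aux_psd_det_nonneg {P : Matrix n n ℝ} (hP : P.PosSemidef) : 0 ≤ P.det := by
  rw [hP.1.det_eq_prod_eigenvalues]
  refine Finset.prod_nonneg fun i _ => ?_
  simpa using hP.eigenvalues_nonneg i

/-- A real positive semidefinite matrix with nonzero determinant is positive definite. -/
lemma aux_posDef_of_det_ne_zero {X : Matrix n n ℝ} (hX : X.PosSemidef)
    (hd : X.det ≠ 0) : X.PosDef := by
  refine Matrix.PosDef.of_dotProduct_mulVec_pos hX.1 (fun x hx => ?_)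
  have h0 : dotProduct (star x) (X *ᵥ x) ≠ 0 := by
    intro h
    have hXx : X *ᵥ x = 0 := (hX.dotProduct_mulVec_zero_iff x).mp h
    apply hx
    have hinj : Function.Injective (X.mulVec) :=
      Matrix.mulVec_injective_iff_isUnit.mpr ((Matrix.isUnit_iff_isUnit_det _).2 hd.isUnit)
    exact hinj (hXx.trans (Matrix.mulVec_zero X).symm)
  exact lt_of_le_of_ne (hX.dotProduct_mulVec_nonneg x) (Ne.symm h0)

/-- Determinant monotonicity: for `X, P` PSD, `det X ≤ det (X + P)`. -/
lemma aux_det_le_det_add {X P : Matrix n n ℝ} (hX : X.PosSemidef) (hP : P.PosSemidef) :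
    X.det ≤ (X + P).det := by
  by_cases hd : X.det = 0
  · rw [hd]
    exact aux_psd_det_nonneg (hX.add hP)
  · have hXpd : X.PosDef := aux_posDef_of_det_ne_zero hX hd
    open scoped MatrixOrder in
    obtain ⟨B, hB⟩ := CStarAlgebra.nonneg_iff_eq_star_mul_self.mp hP.nonneg
    have hBt : P = Bᵀ * B := by rwa [star_eq_conjTranspose, conjTranspose_eq_transpose_of_trivial] at hB
    have hXu : IsUnit X.det := hXpd.det_pos.ne'.isUnit
    have hfact : X + P = X * (1 + (X⁻¹ * Bᵀ) * B) := by
      rw [Matrix.mul_add, Matrix.mul_one, hBt, ← Matrix.mul_assoc, ← Matrix.mul_assoc,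
        Matrix.mul_nonsing_inv _ hXu, Matrix.one_mul]
    have hpsd : (B * (X⁻¹ * Bᵀ)).PosSemidef := by
      have := hXpd.inv.posSemidef.mul_mul_conjTranspose_same B
      rwa [conjTranspose_eq_transpose_of_trivial, Matrix.mul_assoc] at this
    have h1 : 1 ≤ ((1 : Matrix n n ℝ) + (X⁻¹ * Bᵀ) * B).det := by
      rw [det_one_add_mul_comm]
      exact aux_one_le_det_one_add hpsd
    calc X.det = X.det * 1 := (mul_one _).symm
      _ ≤ X.det * ((1 : Matrix n n ℝ) + (X⁻¹ * Bᵀ) * B).det :=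
          mul_le_mul_of_nonneg_left h1 hXpd.det_pos.le
      _ = (X + P).det := by rw [hfact, det_mul]

/-- Fischer-type inequality for a PSD block matrix with positive definite top-left block. -/
lemma aux_fischer {A : Matrix n n ℝ} {B : Matrix n m ℝ} {D : Matrix m m ℝ}
    (hA : A.PosDef) (hT : (fromBlocks A B Bᵀ D).PosSemidef) :
    (fromBlocks A B Bᵀ D).det ≤ A.det * D.det := by
  haveI : Invertible A := A.invertibleOfIsUnitDet hA.det_pos.ne'.isUnit
  have hBH : Bᴴ = Bᵀ := conjTranspose_eq_transpose_of_trivial B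
  have hschur : (D - Bᵀ * A⁻¹ * B).PosSemidef := by
    rw [← hBH] at hT ⊢
    exact (Matrix.PosDef.fromBlocks₁₁ B D hA).mp hT
  have hPpsd : (Bᵀ * A⁻¹ * B).PosSemidef := by
    have := hA.inv.posSemidef.conjTranspose_mul_mul_same B
    rwa [hBH] at this
  have hle := aux_det_le_det_add hschur hPpsd
  rw [sub_add_cancel] at hle
  rw [Matrix.det_fromBlocks₁₁, invOf_eq_nonsing_inv]
  exact mul_le_mul_of_nonneg_left hle hA.det_pos.le

/-- Determinant factorization `det (D + K L) = det D * det (1 + L D⁻¹ K)`. -/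
lemma aux_det_factor {D : Matrix m m ℝ} (hDunit : IsUnit D.det)
    (K : Matrix m n ℝ) (L : Matrix n m ℝ) :
    (D + K * L).det = D.det * ((1 : Matrix n n ℝ) + L * (D⁻¹ * K)).det := by
  have hDDK : D * (D⁻¹ * K) = K := by
    rw [← Matrix.mul_assoc, Matrix.mul_nonsing_inv _ hDunit, Matrix.one_mul]
  have hfact : D + K * L = D * (1 + (D⁻¹ * K) * L) := by
    rw [Matrix.mul_add, Matrix.mul_one, ← Matrix.mul_assoc, hDDK]
  rw [hfact, det_mul, det_one_add_mul_comm]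

end Aux

/-- Lower bound for the envelope log-likelihood ratio:
`log det(Gᵀ S G) + log det(G_oᵀ (S + β Σ_X βᵀ) G_o) − log det S
  ≥ log det(I_p + Σ_X^{1/2} βᵀ G_o (G_oᵀ S G_o)⁻¹ G_oᵀ β Σ_X^{1/2})`. -/
theorem log_lik_ratio_lower_bound
    {r p j : ℕ} (hj1 : 1 ≤ j) (hj2 : j ≤ r - 1)
    (S : Matrix (Fin r) (Fin r) ℝ) (hS : S.PosDef)
    (Sx : Matrix (Fin p) (Fin p) ℝ) (hSx : Sx.PosSemidef)
    (Sx12 : Matrix (Fin p) (Fin p) ℝ) (hSx12 : Sx12.PosSemidef)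
    (hsq : Sx12 * Sx12 = Sx)
    (β : Matrix (Fin r) (Fin p) ℝ)
    (G : Matrix (Fin r) (Fin j) ℝ) (Go : Matrix (Fin r) (Fin (r - j)) ℝ)
    (hG : Gᵀ * G = 1) (hGo : Goᵀ * Go = 1) (hGGo : Gᵀ * Go = 0) :
    Real.log ((1 : Matrix (Fin p) (Fin p) ℝ)
        + Sx12 * βᵀ * Go * (Goᵀ * S * Go)⁻¹ * Goᵀ * β * Sx12).det ≤
      Real.log (Gᵀ * S * G).det
        + Real.log (Goᵀ * (S + β * Sx * βᵀ) * Go).det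
        - Real.log S.det := by
  classical
  have hjr : j ≤ r := le_trans hj2 (Nat.sub_le r 1)
  have hadd : j + (r - j) = r := Nat.add_sub_cancel' hjr
  let e : Fin r ≃ Fin j ⊕ Fin (r - j) := (finCongr hadd.symm).trans finSumFinEquiv.symm
  set M : Matrix (Fin r) (Fin j ⊕ Fin (r - j)) ℝ := fromCols G Go with hMdef
  have hGoG : Goᵀ * G = (0 : Matrix (Fin (r - j)) (Fin j) ℝ) := by
    have h := congrArg Matrix.transpose hGGo
    simpa [Matrix.transpose_mul] using h
  have hMtM : Mᵀ * M = 1 := by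
    rw [hMdef, transpose_fromCols, fromRows_mul_fromCols, hG, hGo, hGGo, hGoG,
      fromBlocks_one]
  have hSt : Sᵀ = S := by
    have := hS.1
    rwa [← conjTranspose_eq_transpose_of_trivial]
  -- the blocks
  set A : Matrix (Fin j) (Fin j) ℝ := Gᵀ * S * G with hAdef
  set D : Matrix (Fin (r - j)) (Fin (r - j)) ℝ := Goᵀ * S * Go with hDdef
  set B : Matrix (Fin j) (Fin (r - j)) ℝ := Gᵀ * S * Go with hBdef
  have hA : A.PosDef := aux_posdef_conj hS G hG
  have hD : D.PosDef := aux_posdef_conj hS Go hGo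
  have hBt : Bᵀ = Goᵀ * S * G := by
    rw [hBdef]
    simp [Matrix.transpose_mul, hSt, Matrix.mul_assoc]
  have hTform : Mᵀ * S * M = fromBlocks A B Bᵀ D := by
    rw [hMdef, transpose_fromCols, fromRows_mul, fromRows_mul_fromCols, hBt,
      hAdef, hBdef, hDdef]
  -- positive semidefiniteness of the block matrix
  have hTpsd : (fromBlocks A B Bᵀ D).PosSemidef := by
    rw [← hTform]
    have := hS.posSemidef.conjTranspose_mul_mul_same M
    rwa [conjTranspose_eq_transpose_of_trivial] at this
  -- determinant of S equals determinant of the block matrix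
  set Msq : Matrix (Fin r) (Fin r) ℝ := M.submatrix id e with hMsqdef
  have hconj : ∀ X : Matrix (Fin r) (Fin r) ℝ,
      Msqᵀ * X * Msq = (Mᵀ * X * M).submatrix e e := by
    intro X
    ext i k
    simp [hMsqdef, Matrix.mul_apply, Matrix.submatrix, Matrix.transpose_apply]
  have hMsqtMsq : Msqᵀ * Msq = 1 := by
    have h := hconj 1
    rw [Matrix.mul_one, Matrix.mul_one, hMtM, Matrix.submatrix_one_equiv] at h
    exact h
  have hdetS : S.det = (fromBlocks A B Bᵀ D).det := by
    have h3 := congrArg Matrix.det (hconj S)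
    rw [det_mul, det_mul, det_transpose, Matrix.det_submatrix_equiv_self, hTform] at h3
    have hMsqdet : Msq.det * Msq.det = 1 := by
      have h4 : (Msqᵀ * Msq).det = 1 := by rw [hMsqtMsq, det_one]
      rwa [det_mul, det_transpose] at h4
    calc S.det = Msq.det * S.det * Msq.det := by
          rw [mul_comm (Msq.det) (S.det), mul_assoc, hMsqdet, mul_one]
      _ = (fromBlocks A B Bᵀ D).det := h3
  -- Fischer inequality
  have hfischer : S.det ≤ A.det * D.det := hdetS ▸ aux_fischer hA hTpsd
  -- factorization of det(Goᵀ (S + β Sx βᵀ) Go)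
  have hDunit : IsUnit D.det := hD.det_pos.ne'.isUnit
  set K : Matrix (Fin (r - j)) (Fin p) ℝ := Goᵀ * β * Sx12 with hKdef
  set L : Matrix (Fin p) (Fin (r - j)) ℝ := Sx12 * βᵀ * Go with hLdef
  set W : Matrix (Fin p) (Fin p) ℝ := Sx12 * βᵀ * Go * D⁻¹ * Goᵀ * β * Sx12 with hWdef
  have hsplit : Goᵀ * (S + β * Sx * βᵀ) * Go = D + K * L := by
    rw [Matrix.mul_add, Matrix.add_mul, ← hsq, hDdef, hKdef, hLdef]
    congr 1
    simp [Matrix.mul_assoc]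
  have hLDK : (1 : Matrix (Fin p) (Fin p) ℝ) + L * (D⁻¹ * K) = 1 + W := by
    rw [hLdef, hKdef, hWdef]
    congr 1
    simp [Matrix.mul_assoc]
  have hkey : (Goᵀ * (S + β * Sx * βᵀ) * Go).det = D.det * (1 + W).det := by
    rw [hsplit, aux_det_factor hDunit K L, hLDK]
  -- positivity facts
  have hβ : (β * Sx * βᵀ).PosSemidef := by
    have := hSx.mul_mul_conjTranspose_same β
    rwa [conjTranspose_eq_transpose_of_trivial] at this
  have hLpos : 0 < (Goᵀ * (S + β * Sx * βᵀ) * Go).det :=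
    (aux_posdef_conj (hS.add_posSemidef hβ) Go hGo).det_pos
  have hWpos : 0 < (1 + W).det := by
    by_contra hc
    push_neg at hc
    rw [hkey] at hLpos
    nlinarith [hD.det_pos]
  -- final log computation
  have e1 : Real.log (Goᵀ * (S + β * Sx * βᵀ) * Go).det
      = Real.log D.det + Real.log (1 + W).det := by
    rw [hkey, Real.log_mul hD.det_pos.ne' hWpos.ne']
  have e2 : Real.log S.det ≤ Real.log A.det + Real.log D.det := by
    rw [← Real.log_mul hA.det_pos.ne' hD.det_pos.ne']
    exact Real.log_le_log hS.det_pos hfischer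
  rw [e1]
  linarith
end
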